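/- arXiv:2101.05341 — 2 statements merged into one kernel-verified Lean document; each statement's English description precedes it below -/
import Mathlib

section
/- Let A = (a_{i,j}) be a matrix with a_{i,j} = 1/i² for j ≤ i² and 0 otherwise, and Ψ(i,j) = i - j. Then condition (A2) fails: lim_i Σ_{j: Ψ(i,j) ≥ 0} a_{i,j} = 0, and consequently the family F_A^Ψ = {K ⊆ ℕ² : δ_A^Ψ(ℕ² \ K) = 0} equals the family of all subsets of ℕ² (in particular it is not a filter, since ∅ ∈ F_A^Ψ). -/
open Filter Finset Classical

lemma aux_full_tendsto (a : ℕ → ℕ → ℝ)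
    (ha : ∀ i j, a i j = if j ≤ i ^ 2 then 1 / (i : ℝ) ^ 2 else 0) :
    Tendsto (fun i => ∑ j ∈ Finset.range (i + 1), a i j) atTop (nhds 0) := by
  have heq : ∀ i : ℕ, ∑ j ∈ Finset.range (i + 1), a i j = (i + 1) / (i : ℝ) ^ 2 := by
    intro i
    have : ∀ j ∈ Finset.range (i + 1), a i j = 1 / (i : ℝ) ^ 2 := by
      intro j hj
      rw [ha]
      rw [Finset.mem_range] at hj
      have hj' : j ≤ i := Nat.lt_succ_iff.mp hj
      have : j ≤ i ^ 2 := hj'.trans (Nat.le_self_pow two_ne_zero i)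
      simp [this]
    rw [Finset.sum_congr rfl this, Finset.sum_const, Finset.card_range]
    push_cast
    ring
  simp_rw [heq]
  have h1 : Tendsto (fun i : ℕ => ((i : ℝ) + 1) / (i : ℝ) ^ 2) atTop (nhds 0) := by
    apply squeeze_zero' (g := fun i : ℕ => 2 / (i : ℝ))
    · filter_upwards [eventually_ge_atTop 1] with i hi
      positivity
    · filter_upwards [eventually_ge_atTop 1] with i hi
      have hi' : (1:ℝ) ≤ (i:ℝ) := by exact_mod_cast hi
      have hpos : (0:ℝ) < (i:ℝ) := by linarith
      rw [div_le_div_iff₀ (by positivity) hpos]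
      have : (i:ℝ) ^ 2 ≥ (i:ℝ) * 1 := by nlinarith
      nlinarith
    · exact tendsto_const_nhds.div_atTop tendsto_natCast_atTop_atTop
  exact h1
/-- With `a i j = 1/i²` for `j ≤ i²` (else 0) and `Ψ(i,j) = i - j` (so `Ψ(i,j) ≥ 0`
means `j ≤ i`), condition (A2) fails: the full section sums tend to 0; consequently
every subset of ℕ² lies in `F_A^Ψ` (the family is all of 𝒫(ℕ²)), in particular
`∅ ∈ F_A^Ψ`, so `F_A^Ψ` is not a filter. -/
theorem psiA_family_degenerate
    (a : ℕ → ℕ → ℝ) (ha : ∀ i j, a i j = if j ≤ i ^ 2 then 1 / (i : ℝ) ^ 2 else 0) :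
    Tendsto (fun i => ∑ j ∈ Finset.range (i + 1), a i j) atTop (nhds 0) ∧
      {K : Set (ℕ × ℕ) |
          Tendsto (fun i => ∑ j ∈ Finset.range (i + 1), if (i, j) ∈ Kᶜ then a i j else 0)
            atTop (nhds 0)} = Set.univ ∧
      (∅ : Set (ℕ × ℕ)) ∈ {K : Set (ℕ × ℕ) |
          Tendsto (fun i => ∑ j ∈ Finset.range (i + 1), if (i, j) ∈ Kᶜ then a i j else 0)
            atTop (nhds 0)} := by
  have hfull := aux_full_tendsto a ha
  have hanneg : ∀ i j, 0 ≤ a i j := by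
    intro i j; rw [ha]; positivity
  have hallK : ∀ K : Set (ℕ × ℕ),
      Tendsto (fun i => ∑ j ∈ Finset.range (i + 1), if (i, j) ∈ Kᶜ then a i j else 0)
        atTop (nhds 0) := by
    intro K
    apply squeeze_zero
    · intro i
      apply Finset.sum_nonneg
      intro j _
      split <;> [exact hanneg i j; rfl]
    · intro i
      apply Finset.sum_le_sum
      intro j _
      split <;> [rfl; exact hanneg i j]
    · exact hfull
  refine ⟨hfull, ?_, hallK ∅⟩
  ext K
  simp only [Set.mem_setOf_eq, Set.mem_univ, iff_true]
  exact hallK K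
end

section
/- Let A = (a_{i,j}) be a summability matrix: a_{i,j} ≥ 0, Σ_{j: Ψ(i,j)≥0} a_{i,j} ≤ 1 for each i, lim_i Σ_{j: Ψ(i,j)≥0} a_{i,j} = B₀ > 0 exists, and lim_i a_{i,j} = 0 for each fixed j. Then there exists a set K ⊆ ℕ² such that neither K ∈ F_A^Ψ nor (ℕ² \ K) ∈ F_A^Ψ. Consequently, every ultrafilter on ℕ² contains a set not lying in F_A^Ψ, so F_A^Ψ is never an ultrafilter. -/
open Filter Classical

/-- The `i`-th section sum of `K ⊆ ℕ²` with respect to the matrix `a` and the function `Ψ`. -/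
noncomputable def psiASum (a : ℕ → ℕ → ℝ) (Ψ : ℕ × ℕ → ℝ) (K : Set (ℕ × ℕ)) (i : ℕ) : ℝ :=
  ∑' j : ℕ, if (i, j) ∈ K ∧ 0 ≤ Ψ (i, j) then a i j else 0

/-- For any summability matrix, there is a set `K` with neither `K` nor its complement
in `F_A^Ψ`; hence every ultrafilter on ℕ² contains a set not in `F_A^Ψ`, so `F_A^Ψ` is
never an ultrafilter. -/
theorem psiA_filter_not_ultrafilter (a : ℕ → ℕ → ℝ) (Ψ : ℕ × ℕ → ℝ)
    (hpos : ∀ i j, 0 ≤ a i j)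
    (hsum : ∀ i, Summable (fun j : ℕ => if 0 ≤ Ψ (i, j) then a i j else 0))
    (hA1 : ∀ i, (∑' j : ℕ, if 0 ≤ Ψ (i, j) then a i j else 0) ≤ 1)
    (B₀ : ℝ) (hB₀ : 0 < B₀)
    (hA2 : Tendsto (fun i => ∑' j : ℕ, if 0 ≤ Ψ (i, j) then a i j else 0) atTop (nhds B₀))
    (hA3 : ∀ j, Tendsto (fun i => a i j) atTop (nhds 0)) :
    (∃ K : Set (ℕ × ℕ), ¬ Tendsto (psiASum a Ψ Kᶜ) atTop (nhds 0) ∧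
        ¬ Tendsto (psiASum a Ψ K) atTop (nhds 0)) ∧
      ∀ U : Ultrafilter (ℕ × ℕ), ∃ K ∈ U, ¬ Tendsto (psiASum a Ψ Kᶜ) atTop (nhds 0) := by
  classical
  set S : ℕ → ℝ := fun i => ∑' j : ℕ, if 0 ≤ Ψ (i, j) then a i j else 0 with hS
  set K : Set (ℕ × ℕ) := {p | Even p.1} with hK
  have hKe : ∀ i, Even i → psiASum a Ψ K i = S i := by
    intro i hi
    simp only [psiASum, hS, hK, Set.mem_setOf_eq, hi, true_and]
  have hKco : ∀ i, ¬ Even i → psiASum a Ψ Kᶜ i = S i := by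
    intro i hi
    simp only [psiASum, hS, hK, Set.mem_compl_iff, Set.mem_setOf_eq, hi,
      not_false_iff, true_and]
  have h2 : Tendsto (fun n : ℕ => 2 * n) atTop atTop :=
    tendsto_atTop_mono (fun n => by simp; omega) tendsto_id
  have h2' : Tendsto (fun n : ℕ => 2 * n + 1) atTop atTop :=
    tendsto_atTop_mono (fun n => by simp; omega) tendsto_id
  have hKnot : ¬ Tendsto (psiASum a Ψ K) atTop (nhds 0) := by
    intro h
    have h1 : Tendsto (fun n => psiASum a Ψ K (2 * n)) atTop (nhds 0) := h.comp h2
    have hB : Tendsto (fun n => psiASum a Ψ K (2 * n)) atTop (nhds B₀) :=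
      (hA2.comp h2).congr fun n => (hKe _ (even_two_mul n)).symm
    exact absurd (tendsto_nhds_unique h1 hB) hB₀.ne
  have hKcnot : ¬ Tendsto (psiASum a Ψ Kᶜ) atTop (nhds 0) := by
    intro h
    have h1 : Tendsto (fun n => psiASum a Ψ Kᶜ (2 * n + 1)) atTop (nhds 0) := h.comp h2'
    have hB : Tendsto (fun n => psiASum a Ψ Kᶜ (2 * n + 1)) atTop (nhds B₀) :=
      (hA2.comp h2').congr fun n =>
        (hKco _ (by simp [Nat.even_add_one, parity_simps])).symm
    exact absurd (tendsto_nhds_unique h1 hB) hB₀.ne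
  refine ⟨⟨K, hKcnot, hKnot⟩, fun U => ?_⟩
  by_cases hU : K ∈ U
  · exact ⟨K, hU, hKcnot⟩
  · exact ⟨Kᶜ, (Ultrafilter.compl_mem_iff_notMem).mpr hU, by
      rw [compl_compl]; exact hKnot⟩
end
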